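/- Let g be the formal power series over ℚ given by g = Σ_{n≥0} (G n / n!)·Xⁿ. Then (1 − X − (1/2)·X²) · g = 1 in ℚ⟦X⟧; equivalently, the exponential generating function of G is 1/(1 − x − x²/2). -/

import Mathlib

open PowerSeries Finset

/-- The exponential generating function of the sequence `G` counting complete
τ-exceptional sequences over `Γ_n^2` is `1 / (1 - x - x²/2)`. -/
theorem egf_G (G : ℕ → ℕ) (hG0 : G 0 = 1)
    (hG : ∀ n : ℕ, 1 ≤ n →
      G n = (∑ i ∈ Finset.Icc 1 n,
              Nat.choose (n - 1) (i - 1) * G (n - i) * G (i - 1)) +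
            (∑ i ∈ Finset.Icc 1 (n - 1),
              (n - i) * Nat.choose (n - 1) (i - 1) * G (n - i - 1) * G (i - 1))) :
    (1 - PowerSeries.X - PowerSeries.C (R := ℚ) (1 / 2) * PowerSeries.X ^ 2) *
      PowerSeries.mk (fun n => (G n : ℚ) / (Nat.factorial n : ℚ)) = 1 := by
  set a : ℕ → ℚ := fun n => (G n : ℚ) / (Nat.factorial n : ℚ) with ha
  set g : ℚ⟦X⟧ := PowerSeries.mk a with hg
  set f : ℚ⟦X⟧ := 1 - X - C (R := ℚ) (1/2) * X^2 with hf
  have hfac : ∀ n : ℕ, (Nat.factorial n : ℚ) ≠ 0 := fun n => by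
    exact_mod_cast Nat.factorial_ne_zero n
  -- the key recurrence at the ℚ level
  have key : ∀ n : ℕ, a (n+1) * (n+1) =
      (∑ j ∈ range (n+1), a j * a (n-j)) + ∑ j ∈ range n, a j * a (n-1-j) := by
    intro n
    have h1 := hG (n+1) (Nat.le_add_left 1 n)
    simp only [Nat.add_sub_cancel] at h1
    rw [← Finset.Ico_add_one_right_eq_Icc, Finset.sum_Ico_eq_sum_range,
        ← Finset.Ico_add_one_right_eq_Icc, Finset.sum_Ico_eq_sum_range] at h1
    simp only [Nat.succ_sub_one, Nat.add_sub_cancel_left] at h1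
    have hcast : (G (n+1) : ℚ) =
        (∑ j ∈ range (n+1), ((n.choose j : ℚ) * G (n-j) * G j)) +
        ∑ j ∈ range n, (((n-j : ℕ) : ℚ) * (n.choose j : ℚ) * G (n-j-1) * G j) := by
      rw [h1]
      push_cast
      congr 1
      · apply Finset.sum_congr rfl; intro j hj
        rw [show n + 1 - (1 + j) = n - j by omega]
      · apply Finset.sum_congr rfl; intro j hj
        rw [show n + 1 - (1 + j) = n - j by omega]
    have hdiv : a (n+1) * (n+1) = (G (n+1) : ℚ) / n.factorial := by
      simp only [ha, Nat.factorial_succ]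
      push_cast
      field_simp
    rw [hdiv, hcast, add_div, Finset.sum_div, Finset.sum_div]
    congr 1
    · apply Finset.sum_congr rfl; intro j hj
      have hjn : j ≤ n := by simpa [Nat.lt_succ_iff] using hj
      have hc : (n.choose j : ℚ) * j.factorial * (n-j).factorial = n.factorial := by
        exact_mod_cast Nat.choose_mul_factorial_mul_factorial hjn
      simp only [ha]
      rw [div_mul_div_comm, div_eq_div_iff (hfac n) (by positivity)]
      linear_combination ((G j : ℚ) * (G (n-j) : ℚ)) * hc
    · apply Finset.sum_congr rfl; intro j hj
      have hjn : j < n := Finset.mem_range.mp hj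
      have hc : (n.choose j : ℚ) * j.factorial * (n-j).factorial = n.factorial := by
        exact_mod_cast Nat.choose_mul_factorial_mul_factorial hjn.le
      have hfs : ((n-j : ℕ) : ℚ) * (n-1-j).factorial = (n-j).factorial := by
        rw [show n - j = (n - 1 - j) + 1 by omega, Nat.factorial_succ]
        push_cast
        ring
      simp only [ha, show n - j - 1 = n - 1 - j by omega]
      rw [div_mul_div_comm, div_eq_div_iff (hfac n) (by positivity)]
      linear_combination ((n.choose j : ℚ) * (j.factorial : ℚ) * (G j : ℚ) * (G (n-1-j) : ℚ)) * hfs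
        + ((G j : ℚ) * (G (n-1-j) : ℚ)) * hc
  -- derivative of g
  have hdg : d⁄dX ℚ g = (1 + X) * (g * g) := by
    ext n
    rw [coeff_derivative, add_mul, one_mul, map_add]
    have hc1 : coeff n (g * g) = ∑ j ∈ range (n+1), a j * a (n-j) := by
      rw [coeff_mul, Finset.Nat.sum_antidiagonal_eq_sum_range_succ_mk]
      simp [hg, coeff_mk]
    have hc2 : coeff n (X * (g * g)) = ∑ j ∈ range n, a j * a (n-1-j) := by
      cases n with
      | zero => simp
      | succ m =>
        rw [mul_comm X, coeff_succ_mul_X, coeff_mul,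
            Finset.Nat.sum_antidiagonal_eq_sum_range_succ_mk]
        simp [hg, coeff_mk]
    rw [hc1, hc2, ← key n]
    simp only [hg, coeff_mk]
  -- derivative of f
  have hC2 : (C (R := ℚ) (1/2) : ℚ⟦X⟧) * 2 = 1 := by
    rw [show (2 : ℚ⟦X⟧) = C (R := ℚ) 2 by simp [map_ofNat], ← map_mul]
    norm_num
  have hX2 : d⁄dX ℚ (X^2 : ℚ⟦X⟧) = 2 * X := by
    rw [pow_two, Derivation.leibniz]
    simp [smul_eq_mul]
    ring
  have hCX2 : d⁄dX ℚ (C (R := ℚ) (1/2) * X^2 : ℚ⟦X⟧) = X := by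
    rw [Derivation.leibniz, hX2, derivative_C]
    simp only [smul_eq_mul, smul_zero, add_zero]
    linear_combination (X : ℚ⟦X⟧) * hC2
  have hdf : d⁄dX ℚ f = -(1 + X) := by
    rw [hf, map_sub, map_sub, Derivation.map_one_eq_zero, derivative_X, hCX2]
    ring
  -- the series h = f * g - 1 satisfies h' = (1+X) g h and h 0 = 0, hence h = 0
  have hdh : d⁄dX ℚ (f * g - 1) = (1 + X) * g * (f * g - 1) := by
    rw [map_sub, Derivation.map_one_eq_zero, Derivation.leibniz, smul_eq_mul, smul_eq_mul,
      hdg, hdf]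
    ring
  have hzero : ∀ n : ℕ, coeff n (f * g - 1) = 0 := by
    intro n
    induction n using Nat.strong_induction_on with
    | _ n ih =>
      cases n with
      | zero =>
        simp only [map_sub, coeff_zero_eq_constantCoeff, map_mul, map_one, hf, hg]
        simp [constantCoeff_mk, ha, hG0]
      | succ m =>
        have h1 : coeff m (d⁄dX ℚ (f * g - 1)) = coeff (m+1) (f*g-1) * (m+1) :=
          coeff_derivative _ m
        have h2 : coeff m ((1 + X) * g * (f * g - 1)) = 0 := by
          rw [coeff_mul]
          apply Finset.sum_eq_zero
          intro p hp
          have hsum : p.1 + p.2 = m := Finset.HasAntidiagonal.mem_antidiagonal.mp hp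
          rw [ih p.2 (by omega), mul_zero]
        rw [hdh, h2] at h1
        rcases mul_eq_zero.mp h1.symm with h | h
        · exact h
        · exfalso
          have : ((m:ℚ) + 1) ≠ 0 := by positivity
          apply this
          exact_mod_cast h
  have hsub : f * g - 1 = 0 := by
    ext n
    simpa using hzero n
  rw [sub_eq_zero] at hsub
  exact hsub
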